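/- Let R be a nilpotent operator on a finite-dimensional complex normed vector space with R^N = 0, and T = 1 + R. Then for every vector v, the sequence (binomial n (N-1))⁻¹ • T^n v converges to R^{N-1} v as n → ∞. -/
import Mathlib

open Filter Finset

lemma aux_choose_mono_left {n a b : ℕ} (hab : a ≤ b) (hb : b ≤ n / 2) :
    n.choose a ≤ n.choose b := by
  induction b with
  | zero => simp [Nat.le_zero.mp hab]
  | succ b ih =>
    rcases Nat.lt_or_ge a (b + 1) with h | h
    · exact (ih (Nat.lt_succ_iff.mp h) (le_trans (Nat.le_succ b) hb)).trans
        (Nat.choose_le_succ_of_lt_half_left (Nat.lt_of_lt_of_le (Nat.lt_succ_self b) hb))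
    · have : a = b + 1 := le_antisymm hab h
      simp [this]

lemma aux_choose_key {N k n : ℕ} (hk : k < N - 1) (hn : 2 * N ≤ n) :
    n.choose k * (n - N) ≤ n.choose (N - 1) * N := by
  have h1 : n.choose k * (n - N) ≤ n.choose k * (n - k) :=
    Nat.mul_le_mul_left _ (Nat.sub_le_sub_left (le_of_lt (hk.trans_le (Nat.sub_le N 1))) n)
  have h2 : n.choose k * (n - k) = n.choose (k + 1) * (k + 1) :=
    (Nat.choose_succ_right_eq n k).symm
  have h3 : n.choose (k + 1) ≤ n.choose (N - 1) := by
    apply aux_choose_mono_left (by omega) (by omega)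
  calc n.choose k * (n - N) ≤ n.choose (k+1) * (k+1) := h2 ▸ h1
    _ ≤ n.choose (N - 1) * N := Nat.mul_le_mul h3 (by omega)

lemma aux_ratio_tendsto {N k : ℕ} (hk : k < N - 1) :
    Tendsto (fun n : ℕ => ((n.choose (N - 1) : ℂ))⁻¹ * (n.choose k : ℂ))
      atTop (nhds 0) := by
  have hb : ∀ᶠ n : ℕ in atTop,
      ‖((n.choose (N - 1) : ℂ))⁻¹ * (n.choose k : ℂ)‖ ≤ (N : ℝ) / ((n : ℝ) - N) := by
    filter_upwards [eventually_ge_atTop (2 * N + 1)] with n hn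
    have hn' : 2 * N ≤ n := by omega
    have hposc : 0 < n.choose (N - 1) := Nat.choose_pos (by omega)
    have hpos : (0:ℝ) < (n : ℝ) - N := by
      have : (2 * N + 1 : ℝ) ≤ n := by exact_mod_cast hn
      push_cast at this ⊢; linarith
    have key := aux_choose_key hk hn'
    have keyR : (n.choose k : ℝ) * ((n:ℝ) - N) ≤ (n.choose (N-1) : ℝ) * N := by
      have := (Nat.cast_le (α := ℝ)).mpr key
      push_cast [Nat.cast_sub (by omega : N ≤ n)] at this
      convert this using 2
    rw [norm_mul, norm_inv, Complex.norm_natCast, Complex.norm_natCast,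
      inv_mul_eq_div, div_le_div_iff₀ (by exact_mod_cast hposc) hpos]
    linarith
  have hA : Tendsto (fun n : ℕ => (n : ℝ) - N) atTop atTop := by
    simpa [sub_eq_add_neg] using
      tendsto_atTop_add_const_right atTop (-(N : ℝ)) tendsto_natCast_atTop_atTop
  exact squeeze_zero_norm' hb (Tendsto.div_atTop tendsto_const_nhds hA)

theorem stmt_3 {V : Type*} [NormedAddCommGroup V] [NormedSpace ℂ V] [FiniteDimensional ℂ V]
    (N : ℕ) (hN : 1 ≤ N) (R : V →ₗ[ℂ] V) (hR : R ^ N = 0)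
    (T : V →ₗ[ℂ] V) (hT : T = 1 + R) (v : V) :
    Filter.Tendsto (fun n : ℕ => ((n.choose (N - 1) : ℂ))⁻¹ • (T ^ n) v)
      Filter.atTop (nhds ((R ^ (N - 1)) v)) := by
  have hRk : ∀ k, N ≤ k → (R ^ k : V →ₗ[ℂ] V) = 0 := fun k hk => pow_eq_zero_of_le hk hR
  have hTn : ∀ n : ℕ, (T ^ n) v = ∑ k ∈ Finset.range N, (n.choose k : ℂ) • (R ^ k) v := by
    intro n
    have hc : Commute R (1 : V →ₗ[ℂ] V) := Commute.one_right R
    have h1 : (T ^ n) v = ∑ k ∈ Finset.range (n + 1), (n.choose k : ℂ) • (R ^ k) v := by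
      rw [hT, add_comm, hc.add_pow]
      simp [LinearMap.sum_apply, Module.End.mul_apply, Nat.cast_smul_eq_nsmul]
    rw [h1]
    rcases le_or_gt N (n + 1) with h | h
    · refine (Finset.sum_subset (Finset.range_subset_range.mpr h) ?_).symm
      intro k _ hk
      rw [hRk k (by simpa using hk)]
      simp
    · refine Finset.sum_subset (Finset.range_subset_range.mpr h.le) ?_
      intro k hk hk'
      have : n < k := by simp at hk'; omega
      simp [Nat.choose_eq_zero_of_lt this]
  have key : ∀ k ∈ Finset.range N,
      Tendsto (fun n : ℕ => (((n.choose (N - 1) : ℂ))⁻¹ * (n.choose k : ℂ)) • (R ^ k) v)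
        atTop (nhds (if k = N - 1 then (R ^ (N - 1)) v else 0)) := by
    intro k hk
    by_cases hkN : k = N - 1
    · subst hkN
      rw [if_pos rfl]
      refine Tendsto.congr' ?_ tendsto_const_nhds
      filter_upwards [eventually_ge_atTop (N - 1)] with n hn
      have h0 : (n.choose (N - 1) : ℂ) ≠ 0 :=
        Nat.cast_ne_zero.mpr (Nat.choose_pos hn).ne'
      rw [inv_mul_cancel₀ h0, one_smul]
    · rw [if_neg hkN]
      have hk' : k < N - 1 := by have := Finset.mem_range.mp hk; omega
      simpa using (aux_ratio_tendsto hk').smul_const ((R ^ k) v)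
  have hsum := tendsto_finset_sum (Finset.range N) key
  have hval : ∑ k ∈ Finset.range N, (if k = N - 1 then (R ^ (N - 1)) v else 0)
      = (R ^ (N - 1)) v := by
    rw [Finset.sum_ite_eq' (Finset.range N) (N - 1) (fun _ => (R ^ (N - 1)) v)]
    simp [Finset.mem_range]; omega
  rw [hval] at hsum
  refine hsum.congr fun n => ?_
  rw [hTn n, Finset.smul_sum]
  simp [smul_smul]
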